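/- Let P^⊥ be the linear cellular automaton shift determined by Φ and let s_0, s_1, …, s_k ∈ ℤ^d be pairwise distinct elements all having last coordinate equal to 0. Then {s_0,…,s_k} is a mixing set for P^⊥: for all Borel sets A_0, …, A_k ⊆ P^⊥, μ(⋂_{i=0}^{k} σ_{m·s_i}⁻¹(A_i)) tends to ∏_{i=0}^{k} μ(A_i) as m → ∞ in ℕ. -/

import Mathlib

open MeasureTheory Filter Topology

namespace LCA

/-- The full shift `𝔽_p^{ℤ^d}`. -/
abbrev Full (p d : ℕ) : Type := (Fin d → ℤ) → ZMod p

/-- The shift action: `(σ_g x)(n) = x(n+g)`. -/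
def shift (p d : ℕ) (g : Fin d → ℤ) (x : Full p d) : Full p d := fun n => x (n + g)

/-- `e_d = (0,…,0,1)`, the exponent of the "time" variable `X_d`. -/
def eLast (d : ℕ) : Fin d → ℤ := fun i => if (i : ℕ) = d - 1 then 1 else 0

/-- The linear cellular automaton shift `P^⊥` for `P = X_d − Φ`, as a set:
all `x` with `x(n+e_d) = Σ_{m ∈ S(Φ)} Φ(m)·x(n+m)` for every `n`. -/
def Pperp (p d : ℕ) (Φ : (Fin d → ℤ) →₀ ZMod p) : Set (Full p d) :=
  {x | ∀ n : Fin d → ℤ, x (n + eLast d) = ∑ m ∈ Φ.support, Φ m * x (n + m)}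

/-- `P^⊥` as a closed, shift-invariant subgroup of the full shift. -/
def PperpGroup (p d : ℕ) (Φ : (Fin d → ℤ) →₀ ZMod p) : AddSubgroup (Full p d) where
  carrier := Pperp p d Φ
  zero_mem' := by intro n; simp
  add_mem' := by
    intro x y hx hy n
    simp only [Pi.add_apply, hx n, hy n, mul_add, Finset.sum_add_distrib]
  neg_mem' := by
    intro x hx n
    simp only [Pi.neg_apply, hx n, mul_neg, Finset.sum_neg_distrib, neg_inj]

lemma shift_mem_Pperp (p d : ℕ) (Φ : (Fin d → ℤ) →₀ ZMod p) (g : Fin d → ℤ)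
    {x : Full p d} (hx : x ∈ Pperp p d Φ) : shift p d g x ∈ Pperp p d Φ := by
  intro n
  simpa [shift, add_right_comm] using hx (n + g)

/-- The shift action restricted to `P^⊥`. -/
def shiftSub (p d : ℕ) (Φ : (Fin d → ℤ) →₀ ZMod p) (g : Fin d → ℤ)
    (x : PperpGroup p d Φ) : PperpGroup p d Φ :=
  ⟨shift p d g x.1, shift_mem_Pperp p d Φ g x.2⟩

end LCA

namespace LCA

/-- Borel σ-algebra on `P^⊥` (with the subspace topology). -/
noncomputable instance (p d : ℕ) (Φ : (Fin d → ℤ) →₀ ZMod p) :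
    MeasurableSpace (PperpGroup p d Φ) := borel _

instance (p d : ℕ) (Φ : (Fin d → ℤ) →₀ ZMod p) : BorelSpace (PperpGroup p d Φ) := ⟨rfl⟩

end LCA

namespace LCA

open Function Set

set_option synthInstance.maxHeartbeats 1000000

variable {p d : ℕ} [Fact p.Prime] {Φ : (Fin d → ℤ) →₀ ZMod p}

lemma isClosed_Pperp : IsClosed (Pperp p d Φ) := by
  have : Pperp p d Φ =
      ⋂ n : Fin d → ℤ, {x : Full p d | x (n + eLast d) = ∑ m ∈ Φ.support, Φ m * x (n + m)} := by
    ext x; simp [Pperp, Set.mem_iInter]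
  rw [this]
  refine isClosed_iInter fun n => isClosed_eq (continuous_apply _) ?_
  exact continuous_finset_sum _ fun m _ => continuous_const.mul (continuous_apply _)

instance : CompactSpace (PperpGroup p d Φ) :=
  isCompact_iff_compactSpace.mp (isClosed_Pperp.isCompact)

instance : IsTopologicalAddGroup (PperpGroup p d Φ) := by infer_instance
instance : SecondCountableTopology (PperpGroup p d Φ) :=
  TopologicalSpace.secondCountableTopology_induced _ _ Subtype.val
instance : LocallyCompactSpace (PperpGroup p d Φ) := by infer_instance
instance : T2Space (PperpGroup p d Φ) := by infer_instance
instance : MeasurableAdd (PperpGroup p d Φ) := by infer_instance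

end LCA
namespace LCA

set_option linter.unusedSectionVars false

open Finsupp

variable {p d : ℕ} [Fact p.Prime]

/-- Laurent polynomials over `𝔽_p` in `d` variables, as a ring. -/
abbrev MA (p d : ℕ) := AddMonoidAlgebra (ZMod p) (Fin d → ℤ)

/-- The tautological cast from finitely supported functions to the group algebra. -/
def toMA {p d : ℕ} (f : (Fin d → ℤ) →₀ ZMod p) : MA p d := .ofCoeff f

/-- Pairing of a Laurent polynomial with a configuration. -/
noncomputable def pairF (f : MA p d) (x : Full p d) : Full p d :=
  fun n => f.coeff.sum fun m c => c * x (n + m)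

lemma pairF_apply (f : MA p d) (x : Full p d) (n : Fin d → ℤ) :
    pairF f x n = ∑ m ∈ f.coeff.support, f.coeff m * x (n + m) := rfl

@[simp] lemma pairF_zero (x : Full p d) : pairF (0 : MA p d) x = 0 := by
  funext n; simp [pairF]

lemma pairF_add (f g : MA p d) (x : Full p d) :
    pairF (f + g) x = pairF f x + pairF g x := by
  funext n
  simp only [pairF, Pi.add_apply, AddMonoidAlgebra.coeff_add]
  rw [Finsupp.sum_add_index' (by simp) (by intro a b₁ b₂; exact add_mul _ _ _)]

lemma pairF_single (a : Fin d → ℤ) (b : ZMod p) (x : Full p d) (n : Fin d → ℤ) :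
    pairF (AddMonoidAlgebra.single a b : MA p d) x n = b * x (n + a) := by
  simp [pairF, AddMonoidAlgebra.coeff_single, Finsupp.sum_single_index]

lemma pairF_mul (f g : MA p d) (x : Full p d) :
    pairF (f * g) x = pairF f (pairF g x) := by
  induction f using AddMonoidAlgebra.induction_linear with
  | zero => rw [zero_mul]; simp
  | add f₁ f₂ h₁ h₂ => rw [add_mul, pairF_add, h₁, h₂, pairF_add]
  | single a b =>
    induction g using AddMonoidAlgebra.induction_linear with
    | zero => rw [mul_zero]; funext n; simp [pairF_single]
    | add g₁ g₂ h₁ h₂ =>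
      rw [mul_add, pairF_add, h₁, h₂, pairF_add]
      funext n; simp [pairF_single, Pi.add_apply, mul_add]
    | single a' b' =>
      rw [AddMonoidAlgebra.single_mul_single]
      funext n
      rw [pairF_single, pairF_single, pairF_single, add_assoc, mul_assoc]

@[simp] lemma pairF_one (x : Full p d) : pairF (1 : MA p d) x = x := by
  funext n
  rw [show (1 : MA p d) = AddMonoidAlgebra.single 0 1 from rfl, pairF_single]
  simp

lemma pairF_of_mem {Φ : (Fin d → ℤ) →₀ ZMod p} {x : Full p d}
    (hx : x ∈ Pperp p d Φ) : pairF (toMA Φ) x = shift p d (eLast d) x := by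
  funext n
  rw [pairF_apply]
  exact (hx n).symm

lemma pairF_pow_of_mem {Φ : (Fin d → ℤ) →₀ ZMod p} (t : ℕ) {x : Full p d}
    (hx : x ∈ Pperp p d Φ) (n : Fin d → ℤ) :
    pairF (toMA Φ ^ t) x n = x (n + t • eLast d) := by
  induction t generalizing x with
  | zero => simp
  | succ t ih =>
    rw [pow_succ, pairF_mul, pairF_of_mem hx, ih (shift_mem_Pperp p d Φ _ hx)]
    show x (n + t • eLast d + eLast d) = _
    rw [succ_nsmul, ← add_assoc]

lemma supp_pow_horiz {Φ : (Fin d → ℤ) →₀ ZMod p} {i0 : Fin d}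
    (hΦ : ∀ m ∈ Φ.support, m i0 = 0) (t : ℕ) :
    ∀ m ∈ (toMA Φ ^ t).coeff.support, m i0 = 0 := by
  induction t with
  | zero =>
    intro m hm
    rw [pow_zero, show (1 : MA p d) = AddMonoidAlgebra.single 0 1 from rfl] at hm
    have := Finsupp.support_single_subset hm
    simp only [Finset.mem_singleton] at this
    simp [this]
  | succ t ih =>
    intro m hm
    rw [pow_succ] at hm
    have := AddMonoidAlgebra.support_coeff_mul_subset _ _ hm
    rw [Finset.mem_add] at this
    obtain ⟨a, ha, b, hb, rfl⟩ := this
    simp [ih a ha, hΦ b hb]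

lemma MA_ne_zero {Φ : (Fin d → ℤ) →₀ ZMod p} (hΦ2 : 2 ≤ Φ.support.card) :
    toMA Φ ≠ 0 := by
  intro h
  have : Φ.support = ∅ := by
    have : Φ = 0 := congrArg AddMonoidAlgebra.coeff h
    simp [this]
  rw [this] at hΦ2
  simp at hΦ2

lemma MA_pow_ne_zero {Φ : (Fin d → ℤ) →₀ ZMod p} (hΦ2 : 2 ≤ Φ.support.card) (t : ℕ) :
    toMA Φ ^ t ≠ 0 :=
  pow_ne_zero t (MA_ne_zero hΦ2)

end LCA
namespace LCA

set_option linter.unusedSectionVars false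
set_option maxHeartbeats 1000000

open Finsupp Function Pointwise

variable {p d : ℕ} [Fact p.Prime]

lemma continuous_pairF (f : MA p d) (n : Fin d → ℤ) :
    Continuous fun z : Full p d => pairF f z n := by
  have : (fun z : Full p d => pairF f z n)
      = fun z => ∑ m ∈ f.coeff.support, f.coeff m * z (n + m) := rfl
  rw [this]
  exact continuous_finset_sum _ fun m _ => continuous_const.mul (continuous_apply _)

lemma conv_fin_surj {Φ : (Fin d → ℤ) →₀ ZMod p} (hΦ2 : 2 ≤ Φ.support.card)
    (U : Finset (Fin d → ℤ)) (y : Full p d) :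
    ∃ z : Full p d, ∀ u ∈ U, pairF (toMA Φ) z u = y u := by
  classical
  set V : Finset (Fin d → ℤ) := U + Φ.support with hV
  let L : (↥V → ZMod p) →ₗ[ZMod p] (↥U → ZMod p) :=
    { toFun := fun z u => ∑ m ∈ Φ.support.attach,
        Φ m * z ⟨u.1 + m.1, Finset.add_mem_add u.2 m.2⟩
      map_add' := by
        intro z₁ z₂; funext u
        simp [mul_add, Finset.sum_add_distrib]
      map_smul' := by
        intro r z; funext u
        simp only [Pi.smul_apply, smul_eq_mul, RingHom.id_apply, Finset.mul_sum]
        exact Finset.sum_congr rfl fun m _ => by ring }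
  have hLapp : ∀ (z : ↥V → ZMod p) (u : ↥U),
      L z u = ∑ m ∈ Φ.support.attach, Φ m * z ⟨u.1 + m.1, Finset.add_mem_add u.2 m.2⟩ :=
    fun z u => rfl
  have hLsurj : Function.Surjective L := by
    rw [← LinearMap.dualMap_injective_iff, ← LinearMap.ker_eq_bot, LinearMap.ker_eq_bot']
    intro φ hφ
    have hφz : ∀ z, φ (L z) = 0 := fun z => LinearMap.congr_fun hφ z
    have hexp : ∀ g : ↥U → ZMod p,
        φ g = ∑ u : ↥U, g u * φ (Pi.single u 1) := by
      intro g
      have hg : g = ∑ u : ↥U, g u • (Pi.single u (1 : ZMod p) : ↥U → ZMod p) := by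
        funext w
        rw [Finset.sum_apply]
        simp [Pi.single_apply, Finset.sum_ite_eq', mul_comm]
      conv_lhs => rw [hg]
      rw [map_sum]
      exact Finset.sum_congr rfl fun u _ => by rw [LinearMap.map_smul, smul_eq_mul]
    set C : MA p d := ∑ u ∈ U.attach, AddMonoidAlgebra.single u.1 (φ (Pi.single u 1)) with hC
    have key : ∀ v : Fin d → ℤ,
        ∑ u ∈ U.attach, φ (Pi.single u 1) * Φ (v - u.1) = 0 := by
      intro v
      by_cases hv : v ∈ V
      · set zv : ↥V → ZMod p := Pi.single (⟨v, hv⟩ : ↥V) 1 with hzv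
        have hLz : ∀ u : ↥U, L zv u = Φ (v - u.1) := by
          intro u
          rw [hLapp]
          by_cases hmem : v - u.1 ∈ Φ.support
          · rw [Finset.sum_eq_single (⟨v - u.1, hmem⟩ : {m // m ∈ Φ.support})]
            · have : u.1 + (v - u.1) = v := by abel
              simp [hzv, Pi.single_apply, this]
            · intro m _ hne
              have : ¬ (u.1 + m.1 = v) := by
                intro he
                apply hne
                apply Subtype.ext
                simp only
                rw [eq_sub_iff_add_eq']
                exact he
              simp [hzv, Pi.single_apply, Subtype.ext_iff, this]
            · intro h; exact absurd (Finset.mem_attach _ _) h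
          · have h0 : Φ (v - u.1) = 0 := Finsupp.notMem_support_iff.mp hmem
            rw [h0]
            refine Finset.sum_eq_zero fun m _ => ?_
            have : ¬ (u.1 + m.1 = v) := by
              intro he
              apply hmem
              have : v - u.1 = m.1 := by rw [← he]; abel
              rw [this]; exact m.2
            simp [hzv, Pi.single_apply, Subtype.ext_iff, this]
        have hz := hφz zv
        rw [hexp] at hz
        rw [Finset.univ_eq_attach] at hz
        rw [← hz]
        exact Finset.sum_congr rfl fun u _ => by rw [hLz u, mul_comm]
      · refine Finset.sum_eq_zero fun u _ => ?_
        have h0 : Φ (v - u.1) = 0 := by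
          rw [← Finsupp.notMem_support_iff]
          intro hmem
          apply hv
          have hvv : u.1 + (v - u.1) = v := by abel
          rw [hV, ← hvv]
          exact Finset.add_mem_add u.2 hmem
        rw [h0, mul_zero]
    have hCΦ : C * toMA Φ = 0 := by
      ext v
      rw [AddMonoidAlgebra.coeff_zero, Finsupp.coe_zero, Pi.zero_apply, hC, Finset.sum_mul,
        AddMonoidAlgebra.coeff_sum, Finset.sum_apply']
      have step : ∀ u ∈ U.attach,
          (AddMonoidAlgebra.single u.1 (φ (Pi.single u 1)) * toMA Φ).coeff v
            = φ (Pi.single u 1) * Φ (v - u.1) := by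
        intro u _
        rw [AddMonoidAlgebra.coeff_single_mul_apply, neg_add_eq_sub]
        rfl
      rw [Finset.sum_congr rfl step]
      exact key v
    have hC0 : C = 0 := by
      rcases mul_eq_zero.mp hCΦ with h | h
      · exact h
      · exact absurd h (MA_ne_zero hΦ2)
    have hcu : ∀ u0 : ↥U, φ (Pi.single u0 1) = 0 := by
      intro u0
      have h1 : C.coeff u0.1 = 0 := by rw [hC0]; rfl
      rw [hC, AddMonoidAlgebra.coeff_sum, Finset.sum_apply'] at h1
      rw [Finset.sum_eq_single u0] at h1
      · rwa [AddMonoidAlgebra.coeff_single, Finsupp.single_eq_same] at h1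
      · intro u _ hne
        exact Finsupp.single_eq_of_ne' (fun h => hne (Subtype.ext h))
      · intro h; exact absurd (Finset.mem_attach _ _) h
    refine LinearMap.ext fun g => ?_
    rw [hexp]
    simp [hcu]
  obtain ⟨z0, hz0⟩ := hLsurj (fun u => y u.1)
  refine ⟨fun n => if h : n ∈ V then z0 ⟨n, h⟩ else 0, fun u hu => ?_⟩
  have hthis := congrFun hz0 ⟨u, hu⟩
  rw [hLapp] at hthis
  refine Eq.trans ?_ hthis
  show (∑ m ∈ Φ.support, Φ m * (if h : u + m ∈ V then z0 ⟨u + m, h⟩ else 0))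
      = ∑ m ∈ Φ.support.attach, Φ m.1 * z0 ⟨u + m.1, Finset.add_mem_add hu m.2⟩
  rw [← Finset.sum_attach Φ.support
    (fun m => Φ m * (if h : u + m ∈ V then z0 ⟨u + m, h⟩ else 0))]
  refine Finset.sum_congr rfl fun m _ => ?_
  congr 1
  have hmem : u + m.1 ∈ V := Finset.add_mem_add hu m.2
  simp only [dif_pos hmem]

lemma conv_surj {Φ : (Fin d → ℤ) →₀ ZMod p} (hΦ2 : 2 ≤ Φ.support.card) :
    Function.Surjective (fun z : Full p d => pairF (toMA Φ) z) := by
  intro y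
  set K : Finset (Fin d → ℤ) → Set (Full p d) :=
    fun U => {z | ∀ u ∈ U, pairF (toMA Φ) z u = y u} with hK
  have hdir : Directed (fun x1 x2 : Set (Full p d) => x1 ⊇ x2) K := by
    intro U U'
    exact ⟨U ∪ U', fun z hz u hu => hz u (Finset.mem_union_left _ hu),
      fun z hz u hu => hz u (Finset.mem_union_right _ hu)⟩
  have hne : ∀ U, (K U).Nonempty := by
    intro U
    obtain ⟨z, hz⟩ := conv_fin_surj hΦ2 U y
    exact ⟨z, hz⟩
  have hcl : ∀ U, IsClosed (K U) := by
    intro U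
    have : K U = ⋂ u ∈ (U : Set (Fin d → ℤ)), {z : Full p d | pairF (toMA Φ) z u = y u} := by
      ext z; simp [hK]
    rw [this]
    exact isClosed_biInter fun u _ => isClosed_eq (continuous_pairF _ _) continuous_const
  obtain ⟨z, hz⟩ := IsCompact.nonempty_iInter_of_directed_nonempty_isCompact_isClosed
    K hdir hne (fun U => (hcl U).isCompact) hcl
  refine ⟨z, funext fun n => ?_⟩
  have := Set.mem_iInter.mp hz {n}
  exact this n (Finset.mem_singleton_self n)

/-- The one-step "solve for the next layer" map, with a built-in shift. -/
noncomputable def Tsh (Φ : (Fin d → ℤ) →₀ ZMod p) (z : Full p d) : Full p d :=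
  fun n => pairF (toMA Φ) z (n - eLast d)

lemma Tsh_surj {Φ : (Fin d → ℤ) →₀ ZMod p} (hΦ2 : 2 ≤ Φ.support.card) :
    Function.Surjective (Tsh Φ) := by
  intro y
  obtain ⟨z, hz⟩ := conv_surj hΦ2 (fun n' => y (n' + eLast d))
  refine ⟨z, funext fun n => ?_⟩
  have hz' : pairF (toMA Φ) z = fun n' => y (n' + eLast d) := hz
  show pairF (toMA Φ) z (n - eLast d) = y n
  rw [congrFun hz' (n - eLast d), sub_add_cancel]

/-- Any prescription on a horizontal line `{n : n i0 = t0}` extends to a point of `P^⊥`. -/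
lemma line_surj {Φ : (Fin d → ℤ) →₀ ZMod p} {i0 : Fin d}
    (hΦsupp : ∀ m ∈ Φ.support, m i0 = 0) (he : eLast d i0 = 1)
    (hΦ2 : 2 ≤ Φ.support.card) (t0 : ℤ) (b : Full p d) :
    ∃ x ∈ Pperp p d Φ, ∀ n : Fin d → ℤ, n i0 = t0 → x n = b n := by
  classical
  have hpre : ∃ pre : Full p d → Full p d, ∀ y, Tsh Φ (pre y) = y := by
    choose pre hpre using Tsh_surj (Φ := Φ) hΦ2
    exact ⟨pre, hpre⟩
  obtain ⟨pre, hpre⟩ := hpre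
  set l : ℤ → Full p d :=
    fun t => if t0 ≤ t then (Tsh Φ)^[(t - t0).toNat] b else pre^[(t0 - t).toNat] b with hl
  have hstep : ∀ t : ℤ, l (t + 1) = Tsh Φ (l t) := by
    intro t
    by_cases h : t0 ≤ t
    · have h1 : t0 ≤ t + 1 := by omega
      have h2 : (t + 1 - t0).toNat = (t - t0).toNat + 1 := by omega
      rw [hl]
      simp only [if_pos h, if_pos h1, h2]
      rw [Function.iterate_succ_apply']
    · by_cases h' : t + 1 = t0
      · have h1 : t0 ≤ t + 1 := by omega
        have h2 : (t + 1 - t0).toNat = 0 := by omega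
        have h3 : (t0 - t).toNat = 1 := by omega
        rw [hl]
        simp only [if_pos h1, if_neg h, h2, h3]
        rw [Function.iterate_zero_apply, Function.iterate_one]
        exact (hpre b).symm
      · have h1 : ¬ t0 ≤ t + 1 := by omega
        have h2 : (t0 - t).toNat = (t0 - (t+1)).toNat + 1 := by omega
        rw [hl]
        simp only [if_neg h, if_neg h1, h2]
        rw [Function.iterate_succ_apply']
        exact (hpre _).symm
  refine ⟨fun n => l (n i0) n, ?_, ?_⟩
  · intro n
    have h1 : (n + eLast d) i0 = n i0 + 1 := by simp [he]
    show l ((n + eLast d) i0) (n + eLast d) = _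
    rw [h1, hstep (n i0)]
    show pairF (toMA Φ) (l (n i0)) (n + eLast d - eLast d) = _
    rw [add_sub_cancel_right, pairF_apply]
    refine Finset.sum_congr rfl fun m hm => ?_
    have h2 : (n + m) i0 = n i0 := by simp [hΦsupp m hm]
    show Φ m * l (n i0) (n + m) = Φ m * l ((n + m) i0) (n + m)
    rw [h2]
  · intro n hn
    show l (n i0) n = b n
    rw [hn, hl]
    simp

end LCA
namespace LCA

set_option linter.unusedSectionVars false
set_option maxHeartbeats 1000000

open Function MeasureTheory
open scoped ENNReal

variable {p d : ℕ} [Fact p.Prime] {Φ : (Fin d → ℤ) →₀ ZMod p}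

/-- The shift on `P^⊥` as an additive equivalence. -/
noncomputable def shiftE (g : Fin d → ℤ) : PperpGroup p d Φ ≃+ PperpGroup p d Φ where
  toFun := shiftSub p d Φ g
  invFun := shiftSub p d Φ (-g)
  left_inv x := Subtype.ext (funext fun n => by
    show x.1 (n + -g + g) = x.1 n
    rw [neg_add_cancel_right])
  right_inv x := Subtype.ext (funext fun n => by
    show x.1 (n + g + -g) = x.1 n
    rw [add_neg_cancel_right])
  map_add' x y := rfl

lemma continuous_shiftSub (g : Fin d → ℤ) :
    Continuous (shiftSub p d Φ g) := by
  apply Continuous.subtype_mk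
  exact continuous_pi fun n => (continuous_apply (n + g)).comp continuous_subtype_val

variable (μ : Measure (PperpGroup p d Φ)) [IsProbabilityMeasure μ] [μ.IsAddHaarMeasure]

lemma measure_shiftSub_preimage (g : Fin d → ℤ) {C : Set (PperpGroup p d Φ)}
    (hC : MeasurableSet C) : μ (shiftSub p d Φ g ⁻¹' C) = μ C := by
  set e : PperpGroup p d Φ ≃+ PperpGroup p d Φ := shiftE g with he
  have hcont : Continuous e := continuous_shiftSub g
  have hcont' : Continuous e.symm := continuous_shiftSub (-g)
  haveI := AddEquiv.isAddHaarMeasure_map μ e hcont hcont'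
  haveI : IsProbabilityMeasure (Measure.map (⇑e) μ) :=
    Measure.isProbabilityMeasure_map hcont.measurable.aemeasurable
  have heq : Measure.map (⇑e) μ = μ :=
    Measure.isAddHaarMeasure_eq_of_isProbabilityMeasure _ μ
  calc μ (shiftSub p d Φ g ⁻¹' C) = μ (⇑e ⁻¹' C) := rfl
    _ = Measure.map (⇑e) μ C := (Measure.map_apply hcont.measurable hC).symm
    _ = μ C := by rw [heq]

/-- Restriction of configurations in `P^⊥` to a finite family of positions. -/
def restr {J : Type} (ι : J → (Fin d → ℤ)) (x : PperpGroup p d Φ) : J → ZMod p :=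
  fun j => x.1 (ι j)

lemma measurableSet_coord (n : Fin d → ℤ) (c : ZMod p) :
    MeasurableSet {x : PperpGroup p d Φ | x.1 n = c} := by
  have : IsClosed {x : PperpGroup p d Φ | x.1 n = c} :=
    isClosed_eq ((continuous_apply n).comp continuous_subtype_val) continuous_const
  exact this.measurableSet

lemma measurableSet_fiber {J : Type} [Fintype J] (ι : J → (Fin d → ℤ)) (f : J → ZMod p) :
    MeasurableSet (restr (Φ := Φ) ι ⁻¹' {f}) := by
  have : restr (Φ := Φ) ι ⁻¹' {f} = ⋂ j, {x : PperpGroup p d Φ | x.1 (ι j) = f j} := by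
    ext x
    simp only [Set.mem_preimage, Set.mem_singleton_iff, Set.mem_iInter, funext_iff]
    rfl
  rw [this]
  exact MeasurableSet.iInter fun j => measurableSet_coord _ _

lemma restr_surj {J : Type} {i0 : Fin d}
    (hΦsupp : ∀ m ∈ Φ.support, m i0 = 0) (he : eLast d i0 = 1)
    (hΦ2 : 2 ≤ Φ.support.card) (ι : J → (Fin d → ℤ)) (hinj : Function.Injective ι)
    (t0 : ℤ) (hline : ∀ j, ι j i0 = t0) :
    Function.Surjective (restr (Φ := Φ) ι) := by
  classical
  intro f
  set b : Full p d := fun n => if h : ∃ j, ι j = n then f h.choose else 0 with hb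
  obtain ⟨x, hx, hxb⟩ := line_surj hΦsupp he hΦ2 t0 b
  refine ⟨⟨x, hx⟩, funext fun j => ?_⟩
  have h1 : x (ι j) = b (ι j) := hxb _ (hline j)
  have h2 : b (ι j) = f j := by
    rw [hb]
    have hex : ∃ j', ι j' = ι j := ⟨j, rfl⟩
    simp only [dif_pos hex]
    congr 1
    exact hinj hex.choose_spec
  show x (ι j) = f j
  rw [h1, h2]

lemma measure_fiber_eq {J : Type} [Fintype J] (ι : J → (Fin d → ℤ))
    (hsurj : Function.Surjective (restr (Φ := Φ) ι)) (f : J → ZMod p) :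
    μ (restr (Φ := Φ) ι ⁻¹' {f}) = μ (restr (Φ := Φ) ι ⁻¹' {(0 : J → ZMod p)}) := by
  obtain ⟨xf, hxf⟩ := hsurj f
  have hkey : (fun z => xf + z) ⁻¹' (restr (Φ := Φ) ι ⁻¹' {f})
      = restr (Φ := Φ) ι ⁻¹' {(0 : J → ZMod p)} := by
    ext z
    simp only [Set.mem_preimage, Set.mem_singleton_iff]
    constructor
    · intro h
      have : restr (Φ := Φ) ι (xf + z) = restr ι xf + restr ι z := rfl
      rw [this, hxf] at h
      funext j
      have := congrFun h j
      simpa using this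
    · intro h
      have : restr (Φ := Φ) ι (xf + z) = restr ι xf + restr ι z := rfl
      rw [this, hxf, h, add_zero]
  rw [← hkey, measure_preimage_add]

lemma measure_cyl {J : Type} [Fintype J] (ι : J → (Fin d → ℤ))
    (hsurj : Function.Surjective (restr (Φ := Φ) ι)) (S : Set (J → ZMod p)) :
    μ (restr (Φ := Φ) ι ⁻¹' S)
      = (Nat.card S : ℝ≥0∞) * (((p : ℝ≥0∞)) ^ (Fintype.card J))⁻¹ := by
  classical
  -- general counting identity
  have count : ∀ S' : Set (J → ZMod p),
      μ (restr (Φ := Φ) ι ⁻¹' S')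
        = (S'.toFinset.card : ℝ≥0∞) * μ (restr (Φ := Φ) ι ⁻¹' {(0 : J → ZMod p)}) := by
    intro S'
    have hdecomp : restr (Φ := Φ) ι ⁻¹' S' = ⋃ f ∈ S'.toFinset, restr (Φ := Φ) ι ⁻¹' {f} := by
      ext z
      simp [Set.mem_iUnion]
    have hdisj : (↑S'.toFinset : Set (J → ZMod p)).PairwiseDisjoint
        (fun f => restr (Φ := Φ) ι ⁻¹' {f}) := by
      intro f₁ h₁ f₂ h₂ hne
      apply Set.disjoint_left.mpr
      intro z hz₁ hz₂
      simp only [Set.mem_preimage, Set.mem_singleton_iff] at hz₁ hz₂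
      exact hne (by rw [← hz₁, ← hz₂])
    rw [hdecomp, measure_biUnion_finset hdisj (fun f _ => measurableSet_fiber ι f)]
    rw [Finset.sum_congr rfl fun f _ => measure_fiber_eq μ ι hsurj f]
    rw [Finset.sum_const, nsmul_eq_mul]
  have hNq : ((Fintype.card (J → ZMod p) : ℕ) : ℝ≥0∞) = ((p : ℝ≥0∞)) ^ (Fintype.card J) := by
    rw [Fintype.card_fun, ZMod.card]
    push_cast
    ring
  have huniv := count Set.univ
  rw [Set.preimage_univ, measure_univ] at huniv
  simp only [Set.toFinset_univ, Finset.card_univ] at huniv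
  rw [hNq] at huniv
  have hN0 : ((p : ℝ≥0∞)) ^ (Fintype.card J) ≠ 0 := by
    apply pow_ne_zero
    simp [(Fact.out : p.Prime).ne_zero]
  have hNtop : ((p : ℝ≥0∞)) ^ (Fintype.card J) ≠ ⊤ := by
    apply ENNReal.pow_ne_top
    simp
  have hc0 : μ (restr (Φ := Φ) ι ⁻¹' {(0 : J → ZMod p)})
      = (((p : ℝ≥0∞)) ^ (Fintype.card J))⁻¹ := by
    rw [← one_mul ((((p : ℝ≥0∞)) ^ (Fintype.card J)))⁻¹, huniv]
    rw [mul_comm _ (μ _), mul_assoc, ENNReal.mul_inv_cancel hN0 hNtop, mul_one]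
  rw [count S, hc0]
  congr 2
  rw [Nat.card_eq_card_toFinset]

end LCA
namespace LCA

set_option linter.unusedSectionVars false
set_option maxHeartbeats 1000000

open Function MeasureTheory
open scoped ENNReal

variable {p d : ℕ} [Fact p.Prime] {Φ : (Fin d → ℤ) →₀ ZMod p}

/-- The inclusion-restriction map to a finite window `W`. -/
noncomputable def restrW (Φ : (Fin d → ℤ) →₀ ZMod p) (W : Finset (Fin d → ℤ)) :
    PperpGroup p d Φ → (↥W → ZMod p) :=
  restr (fun w : ↥W => w.1)

/-- Cylinder sets carried by a finite window inside a horizontal line. -/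
def Cyl (Φ : (Fin d → ℤ) →₀ ZMod p) (i0 : Fin d) : Set (Set (PperpGroup p d Φ)) :=
  {A | ∃ (t0 : ℤ) (W : Finset (Fin d → ℤ)) (S : Set (↥W → ZMod p)),
    (∀ w ∈ W, w i0 = t0) ∧ A = restrW Φ W ⁻¹' S}

lemma cyl_enlarge {W W' : Finset (Fin d → ℤ)} (hsub : W ⊆ W') (S : Set (↥W → ZMod p)) :
    ∃ S' : Set (↥W' → ZMod p), restrW Φ W ⁻¹' S = restrW Φ W' ⁻¹' S' := by
  refine ⟨(fun g (w : ↥W) => g ⟨w.1, hsub w.2⟩) ⁻¹' S, ?_⟩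
  ext x
  simp only [Set.mem_preimage]
  exact Iff.rfl

/-- Windows on line `t0 + t` can be pushed down to line `t0`. -/
lemma cyl_down {i0 : Fin d} (hΦsupp : ∀ m ∈ Φ.support, m i0 = 0) (he : eLast d i0 = 1)
    {W : Finset (Fin d → ℤ)} {t0 : ℤ} {t : ℕ} (hW : ∀ w ∈ W, w i0 = t0 + t)
    (S : Set (↥W → ZMod p)) :
    ∃ (W' : Finset (Fin d → ℤ)) (S' : Set (↥W' → ZMod p)),
      (∀ w ∈ W', w i0 = t0) ∧ restrW Φ W ⁻¹' S = restrW Φ W' ⁻¹' S' := by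
  classical
  set W' : Finset (Fin d → ℤ) :=
    Finset.image₂ (fun w m => w - t • eLast d + m) W ((toMA Φ ^ t).coeff.support) with hW'
  have hsm : ∀ n : Fin d → ℤ, (t • eLast d) i0 = (t : ℤ) := by
    intro n
    show t • (eLast d i0) = (t : ℤ)
    rw [he]
    simp
  have hline : ∀ w ∈ W', w i0 = t0 := by
    intro w hw
    rw [hW'] at hw
    rw [Finset.mem_image₂] at hw
    obtain ⟨a, ha, b, hb, rfl⟩ := hw
    show (a - t • eLast d + b) i0 = t0
    have h1 : a i0 = t0 + t := hW a ha
    have h2 : b i0 = 0 := supp_pow_horiz hΦsupp t b hb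
    show a i0 - (t • eLast d) i0 + b i0 = t0
    rw [h1, h2, hsm a]
    ring
  set τ : (↥W' → ZMod p) → (↥W → ZMod p) := fun g w =>
    ∑ m ∈ ((toMA Φ ^ t).coeff.support).attach,
      (toMA Φ ^ t).coeff m.1 * g ⟨w.1 - t • eLast d + m.1, Finset.mem_image₂_of_mem w.2 m.2⟩ with hτ
  have hkey : ∀ x : PperpGroup p d Φ, restrW Φ W x = τ (restrW Φ W' x) := by
    intro x
    funext w
    have hp := pairF_pow_of_mem (Φ := Φ) t x.2 (w.1 - t • eLast d)
    rw [sub_add_cancel] at hp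
    show x.1 w.1 = _
    rw [← hp, pairF_apply]
    rw [← Finset.sum_attach ((toMA Φ ^ t).coeff.support)
      (fun m => (toMA Φ ^ t).coeff m * x.1 (w.1 - t • eLast d + m))]
    rfl
  refine ⟨W', τ ⁻¹' S, hline, ?_⟩
  ext x
  simp only [Set.mem_preimage]
  rw [hkey x]

lemma cyl_common {i0 : Fin d} (hΦsupp : ∀ m ∈ Φ.support, m i0 = 0) (he : eLast d i0 = 1)
    {ι' : Type} [Fintype ι'] [Nonempty ι'] (B : ι' → Set (PperpGroup p d Φ))
    (hB : ∀ i, B i ∈ Cyl Φ i0) :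
    ∃ (t0 : ℤ) (W : Finset (Fin d → ℤ)), (∀ w ∈ W, w i0 = t0) ∧
      ∀ i, ∃ S : Set (↥W → ZMod p), B i = restrW Φ W ⁻¹' S := by
  classical
  choose t Wf Sf hWf hBf using hB
  set t0 : ℤ := Finset.univ.inf' Finset.univ_nonempty t with ht0
  have hle : ∀ i, t0 ≤ t i := fun i => Finset.inf'_le _ (Finset.mem_univ i)
  have step : ∀ i, ∃ (W' : Finset (Fin d → ℤ)) (S' : Set (↥W' → ZMod p)),
      (∀ w ∈ W', w i0 = t0) ∧ B i = restrW Φ W' ⁻¹' S' := by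
    intro i
    have hlei := hle i
    have hti : t i = t0 + ((t i - t0).toNat : ℕ) := by omega
    have hWi : ∀ w ∈ Wf i, w i0 = t0 + ((t i - t0).toNat : ℕ) := by
      intro w hw
      rw [← hti]
      exact hWf i w hw
    obtain ⟨W', S', hline, heq⟩ := cyl_down hΦsupp he hWi (Sf i)
    exact ⟨W', S', hline, by rw [hBf i, heq]⟩
  choose W' S' hline heq using step
  refine ⟨t0, Finset.univ.biUnion W', ?_, ?_⟩
  · intro w hw
    rw [Finset.mem_biUnion] at hw
    obtain ⟨i, _, hw⟩ := hw
    exact hline i w hw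
  · intro i
    obtain ⟨S'', hS''⟩ := cyl_enlarge (Φ := Φ)
      (Finset.subset_biUnion_of_mem W' (Finset.mem_univ i)) (S' i)
    exact ⟨S'', by rw [heq i, hS'']⟩

lemma cyl_isSetAlgebra {i0 : Fin d} (hΦsupp : ∀ m ∈ Φ.support, m i0 = 0)
    (he : eLast d i0 = 1) : IsSetAlgebra (Cyl Φ i0) := by
  constructor
  · exact ⟨0, ∅, ∅, by simp, by simp⟩
  · rintro A ⟨t0, W, S, hW, rfl⟩
    exact ⟨t0, W, Sᶜ, hW, by rw [Set.preimage_compl]⟩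
  · intro A₁ A₂ h₁ h₂
    have : ∀ b : Bool, (if b then A₁ else A₂) ∈ Cyl Φ i0 := by
      intro b; cases b <;> simpa
    obtain ⟨t0, W, hW, hS⟩ := cyl_common hΦsupp he _ this
    obtain ⟨S₁, hS₁⟩ := hS true
    obtain ⟨S₂, hS₂⟩ := hS false
    rw [if_pos rfl] at hS₁
    rw [if_neg (by simp)] at hS₂
    exact ⟨t0, W, S₁ ∪ S₂, hW, by rw [hS₁, hS₂, Set.preimage_union]⟩

lemma cyl_measurableSet {A : Set (PperpGroup p d Φ)} {i0 : Fin d} (hA : A ∈ Cyl Φ i0) :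
    MeasurableSet A := by
  classical
  obtain ⟨t0, W, S, hW, rfl⟩ := hA
  have hdecomp : restrW Φ W ⁻¹' S = ⋃ f ∈ S.toFinset, restrW Φ W ⁻¹' {f} := by
    ext z
    simp [Set.mem_iUnion]
  rw [hdecomp]
  exact (S.toFinset : Finset (↥W → ZMod p)).measurableSet_biUnion
    (fun f _ => measurableSet_fiber (fun w : ↥W => w.1) f)

lemma mspace_eq_generateFrom (i0 : Fin d) :
    (inferInstance : MeasurableSpace (PperpGroup p d Φ))
      = MeasurableSpace.generateFrom (Cyl Φ i0) := by
  apply le_antisymm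
  · -- borel ≤ generateFrom
    have h1 : (inferInstance : MeasurableSpace (PperpGroup p d Φ))
        = MeasurableSpace.comap Subtype.val (borel (Full p d)) := borel_comap
    have h2 : borel (Full p d) = (inferInstance : MeasurableSpace (Full p d)) :=
      (BorelSpace.measurable_eq).symm
    rw [h1, h2]
    have h3 : (inferInstance : MeasurableSpace (Full p d))
        = ⨆ n : Fin d → ℤ, MeasurableSpace.comap (fun x : Full p d => x n)
            (inferInstance : MeasurableSpace (ZMod p)) := rfl
    rw [h3, MeasurableSpace.comap_iSup]
    apply iSup_le
    intro n
    intro A hA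
    obtain ⟨s', hs', rfl⟩ := hA
    obtain ⟨s, _, rfl⟩ := hs'
    apply MeasurableSpace.measurableSet_generateFrom
    refine ⟨n i0, {n}, {g : ↥({n} : Finset (Fin d → ℤ)) → ZMod p |
      g ⟨n, Finset.mem_singleton_self n⟩ ∈ s}, ?_, ?_⟩
    · intro w hw
      rw [Finset.mem_singleton] at hw
      rw [hw]
    · ext x
      simp only [Set.mem_preimage, Set.mem_setOf_eq, Function.comp_apply]
      exact Iff.rfl
  · exact MeasurableSpace.generateFrom_le fun A hA => cyl_measurableSet hA

end LCA
namespace LCA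

set_option linter.unusedSectionVars false
set_option maxHeartbeats 1000000

open Function MeasureTheory
open scoped ENNReal symmDiff

variable {p d : ℕ} [Fact p.Prime] {Φ : (Fin d → ℤ) →₀ ZMod p}

lemma abs_prod_sub_prod_le {n : ℕ} (a b : Fin n → ℝ)
    (ha0 : ∀ i, 0 ≤ a i) (ha1 : ∀ i, a i ≤ 1) (hb0 : ∀ i, 0 ≤ b i) (hb1 : ∀ i, b i ≤ 1) :
    |∏ i, a i - ∏ i, b i| ≤ ∑ i, |a i - b i| := by
  classical
  suffices H : ∀ s : Finset (Fin n), |∏ i ∈ s, a i - ∏ i ∈ s, b i| ≤ ∑ i ∈ s, |a i - b i| from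
    H Finset.univ
  intro s
  induction s using Finset.induction with
  | empty => simp
  | @insert j s hj ih =>
    rw [Finset.prod_insert hj, Finset.prod_insert hj, Finset.sum_insert hj]
    have hP1 : |∏ i ∈ s, b i| ≤ 1 := by
      rw [abs_of_nonneg (Finset.prod_nonneg fun i _ => hb0 i)]
      exact Finset.prod_le_one (fun i _ => hb0 i) (fun i _ => hb1 i)
    have haj : |a j| ≤ 1 := by rw [abs_of_nonneg (ha0 j)]; exact ha1 j
    calc |a j * ∏ i ∈ s, a i - b j * ∏ i ∈ s, b i|
        = |a j * (∏ i ∈ s, a i - ∏ i ∈ s, b i) + (a j - b j) * ∏ i ∈ s, b i| := by ring_nf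
      _ ≤ |a j * (∏ i ∈ s, a i - ∏ i ∈ s, b i)| + |(a j - b j) * ∏ i ∈ s, b i| := abs_add_le _ _
      _ = |a j| * |∏ i ∈ s, a i - ∏ i ∈ s, b i| + |a j - b j| * |∏ i ∈ s, b i| := by
          rw [abs_mul, abs_mul]
      _ ≤ 1 * (∑ i ∈ s, |a i - b i|) + |a j - b j| * 1 := by gcongr
      _ = |a j - b j| + ∑ i ∈ s, |a i - b i| := by ring

lemma abs_toReal_sub_le {α : Type*} [MeasurableSpace α] (ν : Measure α)
    [IsFiniteMeasure ν] (X Y : Set α) :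
    |(ν X).toReal - (ν Y).toReal| ≤ (ν (X ∆ Y)).toReal := by
  have key : ∀ U V : Set α, (ν U).toReal - (ν V).toReal ≤ (ν (U ∆ V)).toReal := by
    intro U V
    have hsub : U ⊆ V ∪ (U ∆ V) := by
      intro z hz
      by_cases h : z ∈ V
      · exact Or.inl h
      · exact Or.inr (Set.mem_symmDiff.mpr (Or.inl ⟨hz, h⟩))
    have h1 : ν U ≤ ν V + ν (U ∆ V) :=
      le_trans (measure_mono hsub) (measure_union_le _ _)
    have h2 : (ν U).toReal ≤ (ν V).toReal + (ν (U ∆ V)).toReal := by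
      have := ENNReal.toReal_mono
        (ENNReal.add_ne_top.mpr ⟨measure_ne_top ν _, measure_ne_top ν _⟩) h1
      rwa [ENNReal.toReal_add (measure_ne_top ν _) (measure_ne_top ν _)] at this
    linarith
  rw [abs_sub_le_iff]
  exact ⟨key X Y, by rw [symmDiff_comm]; exact key Y X⟩

lemma measure_iInter_le_measure_iInter_add {α : Type*} [MeasurableSpace α] (ν : Measure α)
    {ι : Type*} [Fintype ι] (X Y : ι → Set α) :
    ν (⋂ i, X i) ≤ ν (⋂ i, Y i) + ∑ i, ν (X i ∆ Y i) := by
  have hsub : (⋂ i, X i) ⊆ (⋂ i, Y i) ∪ ⋃ i, X i ∆ Y i := by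
    intro z hz
    by_cases hy : z ∈ ⋂ i, Y i
    · exact Or.inl hy
    · simp only [Set.mem_iInter, not_forall] at hy
      obtain ⟨j, hj⟩ := hy
      refine Or.inr (Set.mem_iUnion.mpr ⟨j, ?_⟩)
      exact Set.mem_symmDiff.mpr (Or.inl ⟨Set.mem_iInter.mp hz j, hj⟩)
  calc ν (⋂ i, X i) ≤ ν ((⋂ i, Y i) ∪ ⋃ i, X i ∆ Y i) := measure_mono hsub
    _ ≤ ν (⋂ i, Y i) + ν (⋃ i, X i ∆ Y i) := measure_union_le _ _
    _ ≤ ν (⋂ i, Y i) + ∑ i, ν (X i ∆ Y i) := by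
        refine add_le_add_right ?_ _
        have hrw : (⋃ i, X i ∆ Y i) = ⋃ i ∈ Finset.univ, X i ∆ Y i := by simp
        rw [hrw]
        exact measure_biUnion_finset_le Finset.univ _

lemma shiftSub_preimage_symmDiff (g : Fin d → ℤ) (X Y : Set (PperpGroup p d Φ)) :
    shiftSub p d Φ g ⁻¹' (X ∆ Y) = (shiftSub p d Φ g ⁻¹' X) ∆ (shiftSub p d Φ g ⁻¹' Y) := by
  ext z
  simp [Set.mem_symmDiff]

/-- The eventual exact product formula for shifted cylinder sets. -/
lemma eventual_product {i0 : Fin d}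
    (hΦsupp : ∀ m ∈ Φ.support, m i0 = 0) (he : eLast d i0 = 1)
    (hΦ2 : 2 ≤ Φ.support.card)
    (μ : Measure (PperpGroup p d Φ)) [IsProbabilityMeasure μ] [μ.IsAddHaarMeasure]
    {k : ℕ} (s : Fin (k + 1) → (Fin d → ℤ)) (hlast : ∀ i, s i i0 = 0)
    (t0 : ℤ) (W : Finset (Fin d → ℤ)) (hWline : ∀ w ∈ W, w i0 = t0)
    (S : Fin (k + 1) → Set (↥W → ZMod p)) (m : ℕ)
    (hinjm : Function.Injective (fun q : Fin (k + 1) × ↥W => q.2.1 + m • s q.1)) :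
    μ (⋂ i, shiftSub p d Φ (m • s i) ⁻¹' (restrW Φ W ⁻¹' S i))
      = ∏ i, μ (restrW Φ W ⁻¹' S i) := by
  classical
  set ι : Fin (k + 1) × ↥W → (Fin d → ℤ) := fun q => q.2.1 + m • s q.1 with hι
  have hline : ∀ q, ι q i0 = t0 := by
    intro q
    show q.2.1 i0 + (m • s q.1) i0 = t0
    have h1 : (m • s q.1) i0 = m • (s q.1 i0) := rfl
    rw [h1, hlast, smul_zero, hWline _ q.2.2, add_zero]
  have hsurj := restr_surj hΦsupp he hΦ2 ι hinjm t0 hline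
  have hsurjW := restr_surj hΦsupp he hΦ2 (fun w : ↥W => w.1) Subtype.val_injective t0
    (fun w => hWline _ w.2)
  have hset : (⋂ i, shiftSub p d Φ (m • s i) ⁻¹' (restrW Φ W ⁻¹' S i))
      = restr (Φ := Φ) ι ⁻¹' {g : Fin (k + 1) × ↥W → ZMod p |
          ∀ i, (fun w : ↥W => g (i, w)) ∈ S i} := by
    ext x
    simp only [Set.mem_iInter, Set.mem_preimage, Set.mem_setOf_eq]
    exact Iff.rfl
  have hcount : Nat.card {g : Fin (k + 1) × ↥W → ZMod p |
      ∀ i, (fun w : ↥W => g (i, w)) ∈ S i} = ∏ i, Nat.card (S i) := by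
    have E : {g : Fin (k + 1) × ↥W → ZMod p | ∀ i, (fun w : ↥W => g (i, w)) ∈ S i}
        ≃ ∀ i, ↥(S i) :=
      { toFun := fun g i => ⟨fun w => g.1 (i, w), g.2 i⟩
        invFun := fun h => ⟨fun q => (h q.1).1 q.2, fun i => (h i).2⟩
        left_inv := fun g => Subtype.ext (funext fun q => rfl)
        right_inv := fun h => funext fun i => Subtype.ext rfl }
    rw [Nat.card_congr E, Nat.card_pi]
  rw [hset, measure_cyl μ ι hsurj, hcount]
  have hfactor : ∀ i, μ (restrW Φ W ⁻¹' S i)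
      = (Nat.card (S i) : ℝ≥0∞) * (((p : ℝ≥0∞)) ^ (Fintype.card ↥W))⁻¹ := by
    intro i
    exact measure_cyl μ (fun w : ↥W => w.1) hsurjW (S i)
  rw [Finset.prod_congr rfl fun i _ => hfactor i]
  rw [Finset.prod_mul_distrib, Finset.prod_const]
  rw [Nat.cast_prod]
  congr 1
  rw [Finset.card_univ, Fintype.card_fin]
  rw [← ENNReal.inv_pow, ← pow_mul]
  congr 2
  rw [Fintype.card_prod, Fintype.card_fin, mul_comm]

end LCA
namespace LCA

set_option linter.unusedSectionVars false
set_option maxHeartbeats 1000000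

open Function MeasureTheory
open scoped ENNReal symmDiff

variable {p d : ℕ} [Fact p.Prime] {Φ : (Fin d → ℤ) →₀ ZMod p}

lemma eventually_inj {k : ℕ} (s : Fin (k + 1) → (Fin d → ℤ)) (hinj : Function.Injective s)
    (W : Finset (Fin d → ℤ)) :
    ∃ N : ℕ, ∀ m ≥ N, Function.Injective
      (fun q : Fin (k + 1) × ↥W => q.2.1 + m • s q.1) := by
  classical
  set D : Finset (Fin d → ℤ) := Finset.image₂ (fun a b => a - b) W W with hD
  have hfin : ∀ v : Fin d → ℤ, v ≠ 0 → {m : ℕ | m • v ∈ (D : Set (Fin d → ℤ))}.Finite := by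
    intro v hv
    have hmono : Function.Injective (fun m : ℕ => m • v) := by
      obtain ⟨cc, hcc⟩ : ∃ cc, v cc ≠ 0 := by
        by_contra h
        push_neg at h
        exact hv (funext h)
      intro m₁ m₂ hmm
      have h0 : (m₁ • v) cc = (m₂ • v) cc := congrFun hmm cc
      have h1 : (m₁ : ℤ) * v cc = (m₂ : ℤ) * v cc := by
        have e1 : (m₁ • v) cc = (m₁ : ℤ) * v cc := by
          show m₁ • (v cc) = (m₁ : ℤ) * v cc
          rw [nsmul_eq_mul]
        have e2 : (m₂ • v) cc = (m₂ : ℤ) * v cc := by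
          show m₂ • (v cc) = (m₂ : ℤ) * v cc
          rw [nsmul_eq_mul]
        rw [← e1, ← e2, h0]
      have := mul_right_cancel₀ hcc h1
      exact_mod_cast this
    exact Set.Finite.preimage (Set.injOn_of_injective hmono) (D.finite_toSet)
  set Bad : Set ℕ := ⋃ (i : Fin (k + 1)), ⋃ (j : Fin (k + 1)), ⋃ (_ : i ≠ j),
    {m : ℕ | m • (s i - s j) ∈ (D : Set (Fin d → ℤ))} with hBad
  have hBadFin : Bad.Finite :=
    Set.finite_iUnion fun i => Set.finite_iUnion fun j => Set.finite_iUnion fun hne =>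
      hfin _ (sub_ne_zero.mpr fun h => hne (hinj h))
  obtain ⟨N0, hN0⟩ := hBadFin.bddAbove
  refine ⟨N0 + 1, fun m hm => ?_⟩
  rintro ⟨i, w⟩ ⟨j, w'⟩ heq
  simp only at heq
  by_cases hij : i = j
  · subst hij
    have hw : w.1 = w'.1 := by
      have := heq
      exact add_right_cancel this
    rw [Subtype.ext hw]
  · exfalso
    have hmem : m • (s i - s j) ∈ (D : Set (Fin d → ℤ)) := by
      have h2 : m • s i - m • s j = w'.1 - w.1 := by
        rw [sub_eq_sub_iff_add_eq_add]
        rw [add_comm] at heq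
        exact heq
      rw [smul_sub, h2]
      exact Finset.mem_coe.mpr (Finset.mem_image₂_of_mem w'.2 w.2)
    have hmBad : m ∈ Bad := by
      rw [hBad]
      simp only [Set.mem_iUnion]
      exact ⟨i, j, hij, hmem⟩
    have := hN0 hmBad
    omega

end LCA
open LCA MeasureTheory Filter Topology
open scoped ENNReal symmDiff

/-- Let `P^⊥` be the linear cellular automaton shift determined by `Φ` and
let `s_0,…,s_k ∈ ℤ^d` be pairwise distinct, all with last coordinate `0`.  Then
`{s_0,…,s_k}` is a mixing set for `P^⊥`: for all Borel sets `A_0,…,A_k ⊆ P^⊥`,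
`μ(⋂ᵢ σ_{m·s_i}⁻¹(A_i))` tends to `∏ᵢ μ(A_i)` as `m → ∞` in `ℕ`. -/
theorem horizontal_set_is_mixing (p d : ℕ) [Fact p.Prime] (hd : 2 ≤ d)
    (Φ : (Fin d → ℤ) →₀ ZMod p)
    (hΦsupp : ∀ m ∈ Φ.support, m ⟨d - 1, by omega⟩ = 0)
    (hΦ2 : 2 ≤ Φ.support.card)
    (μ : Measure (PperpGroup p d Φ)) [IsProbabilityMeasure μ] [μ.IsAddHaarMeasure]
    (k : ℕ) (s : Fin (k + 1) → (Fin d → ℤ)) (hinj : Function.Injective s)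
    (hlast : ∀ i, s i ⟨d - 1, by omega⟩ = 0)
    (A : Fin (k + 1) → Set (PperpGroup p d Φ)) (hA : ∀ i, MeasurableSet (A i)) :
    Tendsto (fun m : ℕ => μ (⋂ i, shiftSub p d Φ (m • s i) ⁻¹' A i)) atTop
      (nhds (∏ i, μ (A i))) := by
  classical
  set i0 : Fin d := ⟨d - 1, by omega⟩ with hi0
  have he : eLast d i0 = 1 := by simp [eLast, hi0]
  have hΦsupp' : ∀ m ∈ Φ.support, m i0 = 0 := hΦsupp
  have hlast' : ∀ i, s i i0 = 0 := hlast
  -- measure-density of cylinder sets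
  have halg := cyl_isSetAlgebra (Φ := Φ) hΦsupp' he
  have hgen := mspace_eq_generateFrom (Φ := Φ) i0
  have hdense := Measure.MeasureDense.of_generateFrom_isSetAlgebra_finite (μ := μ) halg hgen
  -- reduce to a real-valued limit
  have hfin : ∀ m : ℕ, μ (⋂ i, shiftSub p d Φ (m • s i) ⁻¹' A i) ≠ ⊤ :=
    fun m => measure_ne_top μ _
  have hLfin : (∏ i, μ (A i)) ≠ ⊤ := ENNReal.prod_ne_top fun i _ => measure_ne_top μ _
  rw [← ENNReal.tendsto_toReal_iff hfin hLfin, Metric.tendsto_atTop]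
  intro ε hε
  set ε' : ℝ := ε / (2 * (k + 1) + 1) with hε'def
  have hε'pos : 0 < ε' := by positivity
  -- approximate each `A i` by a cylinder set `B i`
  have happrox : ∀ i, ∃ B ∈ Cyl Φ i0, μ (A i ∆ B) < ENNReal.ofReal ε' := fun i =>
    hdense.approx (A i) (hA i) (measure_ne_top μ _) ε' hε'pos
  choose B hBmem hBclose using happrox
  have hBmeas : ∀ i, MeasurableSet (B i) := fun i => cyl_measurableSet (hBmem i)
  obtain ⟨t0, W, hWline, hSex⟩ := cyl_common hΦsupp' he B hBmem
  choose S hS using hSex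
  obtain ⟨N, hN⟩ := eventually_inj s hinj W
  refine ⟨N, fun m hm => ?_⟩
  -- from here on, `m` is large enough for the exact product formula
  have hprodB : μ (⋂ i, shiftSub p d Φ (m • s i) ⁻¹' B i) = ∏ i, μ (B i) := by
    have hg1 : (⋂ i, shiftSub p d Φ (m • s i) ⁻¹' B i)
        = ⋂ i, shiftSub p d Φ (m • s i) ⁻¹' (restrW Φ W ⁻¹' S i) :=
      Set.iInter_congr fun i => by rw [hS i]
    have hg2 : (∏ i, μ (B i)) = ∏ i, μ (restrW Φ W ⁻¹' S i) :=
      Finset.prod_congr rfl fun i _ => by rw [hS i]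
    rw [hg1, hg2]
    exact eventual_product hΦsupp' he hΦ2 μ s hlast' t0 W hWline S m (hN m hm)
  set c : Fin (k + 1) → ℝ := fun i => (μ (A i ∆ B i)).toReal with hcdef
  have hcbound : ∀ i, c i < ε' := fun i => ENNReal.toReal_lt_of_lt_ofReal (hBclose i)
  have hcnn : ∀ i, 0 ≤ c i := fun i => ENNReal.toReal_nonneg
  have hsumfin : (∑ i, μ (A i ∆ B i)) ≠ ⊤ :=
    (ENNReal.sum_lt_top.mpr fun i _ => measure_lt_top μ _).ne
  have hsumtoReal : (∑ i, μ (A i ∆ B i)).toReal = ∑ i, c i :=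
    ENNReal.toReal_sum fun i _ => measure_ne_top μ _
  -- |μ(⋂ σ⁻¹Aᵢ) − μ(⋂ σ⁻¹Bᵢ)| ≤ ∑ μ(Aᵢ ∆ Bᵢ)
  have hshiftΔ : ∀ i, μ ((shiftSub p d Φ (m • s i) ⁻¹' A i) ∆ (shiftSub p d Φ (m • s i) ⁻¹' B i))
      = μ (A i ∆ B i) := by
    intro i
    rw [← shiftSub_preimage_symmDiff]
    exact measure_shiftSub_preimage μ _ ((hA i).symmDiff (hBmeas i))
  have hkey1 : |(μ (⋂ i, shiftSub p d Φ (m • s i) ⁻¹' A i)).toReal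
      - (μ (⋂ i, shiftSub p d Φ (m • s i) ⁻¹' B i)).toReal| ≤ ∑ i, c i := by
    have hb : ∀ (X Y : Fin (k + 1) → Set (PperpGroup p d Φ)),
        (∀ i, μ (X i ∆ Y i) = μ (A i ∆ B i)) →
        (μ (⋂ i, X i)).toReal - (μ (⋂ i, Y i)).toReal ≤ ∑ i, c i := by
      intro X Y hXY
      have h1 : μ (⋂ i, X i) ≤ μ (⋂ i, Y i) + ∑ i, μ (A i ∆ B i) := by
        refine le_trans (measure_iInter_le_measure_iInter_add μ X Y) ?_
        exact add_le_add_right (le_of_eq (Finset.sum_congr rfl fun i _ => hXY i)) _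
      have h2 := ENNReal.toReal_mono
        (ENNReal.add_ne_top.mpr ⟨measure_ne_top μ _, hsumfin⟩) h1
      rw [ENNReal.toReal_add (measure_ne_top μ _) hsumfin, hsumtoReal] at h2
      linarith
    rw [abs_sub_le_iff]
    constructor
    · exact hb _ _ hshiftΔ
    · refine hb _ _ fun i => ?_
      rw [symmDiff_comm]
      exact hshiftΔ i
  -- |∏ μ(Bᵢ) − ∏ μ(Aᵢ)| ≤ ∑ μ(Aᵢ ∆ Bᵢ)
  have htoReal_le_one : ∀ X : Set (PperpGroup p d Φ), (μ X).toReal ≤ 1 := by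
    intro X
    have h1 := ENNReal.toReal_mono (by simp) (prob_le_one (μ := μ) (s := X))
    simpa using h1
  have hkey2 : |(∏ i, μ (B i)).toReal - (∏ i, μ (A i)).toReal| ≤ ∑ i, c i := by
    rw [ENNReal.toReal_prod, ENNReal.toReal_prod]
    refine le_trans (abs_prod_sub_prod_le _ _ (fun i => ENNReal.toReal_nonneg)
      (fun i => htoReal_le_one _) (fun i => ENNReal.toReal_nonneg)
      (fun i => htoReal_le_one _)) ?_
    refine Finset.sum_le_sum fun i _ => ?_
    have := abs_toReal_sub_le μ (B i) (A i)
    rwa [symmDiff_comm] at this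
  -- numerics
  have hsumc : ∑ i, c i < (k + 1 : ℝ) * ε' := by
    have hlt := Finset.sum_lt_sum_of_nonempty (Finset.univ_nonempty
      (α := Fin (k + 1))) (fun i _ => hcbound i)
    have : ∑ _i : Fin (k + 1), ε' = (k + 1 : ℝ) * ε' := by
      rw [Finset.sum_const, Finset.card_univ, Fintype.card_fin, nsmul_eq_mul]
      push_cast
      ring
    linarith [this ▸ hlt]
  have harith : 2 * ((k + 1 : ℝ) * ε') < ε := by
    have h0 : (0 : ℝ) < 2 * (k + 1) + 1 := by positivity
    have hrw : 2 * ((k + 1 : ℝ) * ε') = (2 * (k + 1)) * ε / (2 * (k + 1) + 1) := by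
      rw [hε'def]; ring
    rw [hrw, div_lt_iff₀ h0]
    nlinarith
  rw [Real.dist_eq]
  have htri := abs_sub_le
    ((μ (⋂ i, shiftSub p d Φ (m • s i) ⁻¹' A i)).toReal)
    ((μ (⋂ i, shiftSub p d Φ (m • s i) ⁻¹' B i)).toReal)
    ((∏ i, μ (A i)).toReal)
  have hmid : |(μ (⋂ i, shiftSub p d Φ (m • s i) ⁻¹' B i)).toReal
      - (∏ i, μ (A i)).toReal| ≤ ∑ i, c i := by
    rw [hprodB]
    exact hkey2
  calc |(μ (⋂ i, shiftSub p d Φ (m • s i) ⁻¹' A i)).toReal - (∏ i, μ (A i)).toReal|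
      ≤ _ + _ := htri
    _ ≤ (∑ i, c i) + (∑ i, c i) := add_le_add hkey1 hmid
    _ < ((k + 1 : ℝ) * ε') + ((k + 1 : ℝ) * ε') := by
        have h1 := hsumc
        linarith
    _ ≤ 2 * ((k + 1 : ℝ) * ε') := by ring_nf; exact le_refl _
    _ < ε := harith
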